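/- arXiv:2507.12709 — 3 statements merged into one kernel-verified Lean document; each statement's English description precedes it below -/
import Mathlib

section
/- Let p : ℝ → ℝ be differentiable on (0,∞) with p(λ) > 0 for all λ > 0, and suppose p satisfies the first-order stationary flux equation (α₀ − β₁·λ)·p(λ) = 4ηD · d/dλ(λ·p(λ)) for all λ > 0. Then there exists a constant C > 0 such that p(λ) = C · λ^{α₀/(4ηD) − 1} · exp(−(β₁/(4ηD))·λ) for all λ > 0. -/
open Set Real

/-- uniqueness part of Theorem 3.2.
If a positive, differentiable density `p` on `(0,∞)` satisfies the first-order
stationary flux equation `(α₀ − β₁ λ) p λ = 4ηD (λ p λ)'`, then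
`p λ = C λ^(α₀/(4ηD) − 1) exp(−(β₁/(4ηD)) λ)` for some constant `C > 0`. -/
theorem stationary_flux_solution_is_gamma
    (η D β₁ : ℝ) (hη : 0 < η) (hD : 0 < D) (hβ₁ : 0 < β₁)
    (m n : ℤ) (hmn : n ≤ m) (hn : 1 ≤ n)
    (α₀ : ℝ) (hα₀ : α₀ = η * D * ((m : ℝ) - (n : ℝ) + 3))
    (p : ℝ → ℝ)
    (hdiff : DifferentiableOn ℝ p (Set.Ioi (0 : ℝ)))
    (hpos : ∀ x : ℝ, 0 < x → 0 < p x)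
    (hflux : ∀ x : ℝ, 0 < x →
      (α₀ - β₁ * x) * p x = 4 * η * D * deriv (fun y : ℝ => y * p y) x) :
    ∃ C : ℝ, 0 < C ∧ ∀ x : ℝ, 0 < x →
      p x = C * x ^ (α₀ / (4 * η * D) - 1) * Real.exp (-(β₁ / (4 * η * D)) * x) := by
  set k : ℝ := 4 * η * D with hk_def
  have hk : 0 < k := by positivity
  set a : ℝ := α₀ / k with ha_def
  set b : ℝ := β₁ / k with hb_def
  set q : ℝ → ℝ := fun y => y * p y with hq_def
  set h : ℝ → ℝ := fun y => q y * (Real.exp (b * y) * y ^ (-a)) with hh_def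
  -- q has derivative (a/x - b) * q x at x > 0
  have hq' : ∀ x : ℝ, 0 < x → HasDerivAt q ((a / x - b) * q x) x := by
    intro x hx
    have hpx : DifferentiableAt ℝ p x :=
      (hdiff x hx).differentiableAt (isOpen_Ioi.mem_nhds hx)
    have hqx : DifferentiableAt ℝ q x := differentiableAt_id.mul hpx
    have hda := hqx.hasDerivAt
    have hfl := hflux x hx
    have h1 : deriv q x * k = (α₀ - β₁ * x) * p x := by rw [hfl]; ring
    have hderiv : deriv q x = (a / x - b) * q x := by
      have h2 : deriv q x = (α₀ - β₁ * x) * p x / k := (eq_div_iff hk.ne').mpr h1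
      rw [h2, ha_def, hb_def, hq_def]
      field_simp
    rwa [hderiv] at hda
  -- h has derivative 0 at each x > 0
  have hh' : ∀ x ∈ Set.Ioi (0 : ℝ), HasDerivAt h 0 x := by
    intro x hx
    have hx' : (0 : ℝ) < x := hx
    have hxne : x ≠ 0 := ne_of_gt hx'
    have hb' : HasDerivAt (fun y : ℝ => b * y) b x := by
      simpa using (hasDerivAt_id x).const_mul b
    have he : HasDerivAt (fun y : ℝ => Real.exp (b * y)) (Real.exp (b * x) * b) x := hb'.exp
    have hr : HasDerivAt (fun y : ℝ => y ^ (-a)) (-a * x ^ (-a - 1)) x :=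
      Real.hasDerivAt_rpow_const (Or.inl hxne)
    have hprod : HasDerivAt (fun y : ℝ => Real.exp (b * y) * y ^ (-a))
        (Real.exp (b * x) * b * x ^ (-a) + Real.exp (b * x) * (-a * x ^ (-a - 1))) x :=
      he.mul hr
    have hfull : HasDerivAt h
        ((a / x - b) * q x * (Real.exp (b * x) * x ^ (-a)) +
          q x * (Real.exp (b * x) * b * x ^ (-a) + Real.exp (b * x) * (-a * x ^ (-a - 1)))) x :=
      (hq' x hx').mul hprod
    have hkey : (a / x - b) * q x * (Real.exp (b * x) * x ^ (-a)) +
        q x * (Real.exp (b * x) * b * x ^ (-a) + Real.exp (b * x) * (-a * x ^ (-a - 1))) = 0 := by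
      have hxr : x ^ (-a - 1) = x ^ (-a) / x := by
        rw [Real.rpow_sub hx', Real.rpow_one]
      rw [hxr]
      field_simp
      ring
    rwa [hkey] at hfull
  -- h is constant on Ioi 0
  have hconst : ∀ x ∈ Set.Ioi (0 : ℝ), h x = h 1 := by
    intro x hx
    have hdiffh : DifferentiableOn ℝ h (Set.Ioi (0 : ℝ)) := fun y hy =>
      ((hh' y hy).differentiableAt).differentiableWithinAt
    have hfd : ∀ y ∈ Set.Ioi (0 : ℝ), fderivWithin ℝ h (Set.Ioi (0 : ℝ)) y = 0 := by
      intro y hy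
      have hfda := (hh' y hy).hasFDerivAt
      have h0 : (ContinuousLinearMap.toSpanSingleton ℝ (0 : ℝ)) = 0 := by
        ext; simp
      rw [h0] at hfda
      exact hfda.hasFDerivWithinAt.fderivWithin (isOpen_Ioi.uniqueDiffWithinAt hy)
    exact (convex_Ioi (0 : ℝ)).is_const_of_fderivWithin_eq_zero hdiffh hfd hx
      (by norm_num : (1 : ℝ) ∈ Set.Ioi (0 : ℝ))
  refine ⟨h 1, ?_, ?_⟩
  · have h1 : h 1 = p 1 * Real.exp b := by
      simp [hh_def, hq_def]
    rw [h1]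
    exact mul_pos (hpos 1 one_pos) (Real.exp_pos b)
  · intro x hx
    have hxne : x ≠ 0 := ne_of_gt hx
    have key : x * p x * (Real.exp (b * x) * x ^ (-a)) = h 1 := hconst x hx
    have hsplit : x ^ (a - 1) = x ^ a / x := by
      rw [Real.rpow_sub hx, Real.rpow_one]
    have hxaa : x ^ (-a) * x ^ a = 1 := by
      rw [← Real.rpow_add hx]; simp
    have hfin : p x = h 1 * x ^ (a - 1) * Real.exp (-b * x) := by
      rw [← key, hsplit]
      have e2 : x * p x * (Real.exp (b * x) * x ^ (-a)) * (x ^ a / x) * Real.exp (-b * x)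
          = p x * ((x ^ (-a) * x ^ a) *
              ((Real.exp (b * x) * Real.exp (-b * x)) * (x / x))) := by ring
      rw [e2, hxaa, ← Real.exp_add, div_self hxne]
      simp [neg_mul]
    rw [hfin]
end

section
/- Define p : ℝ → ℝ by p(λ) = λ^{a−1}·exp(−b·λ) for λ > 0, where a := α₀/(4ηD) = (m−n+3)/4 and b := β₁/(4ηD). Then p is twice differentiable on (0,∞) and satisfies the stationary Fokker–Planck equation 0 = −d/dλ[(α₀ − β₁·λ)·p(λ)] + (1/2)·d²/dλ²[8ηD·λ·p(λ)] for all λ > 0. -/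
open Set Real

/-- existence part of Theorem 3.2.
The Gamma-type density `p λ = λ^(a−1) exp(−b λ)`, with `a = α₀/(4ηD) = (m−n+3)/4`
and `b = β₁/(4ηD)`, is twice differentiable on `(0,∞)` and solves the stationary
Fokker–Planck equation `0 = −d/dλ[(α₀ − β₁ λ) p λ] + (1/2) d²/dλ²[8ηD λ p λ]`. -/
theorem gamma_density_solves_stationary_fokker_planck
    (η D β₁ : ℝ) (hη : 0 < η) (hD : 0 < D) (hβ₁ : 0 < β₁)
    (m n : ℤ) (hmn : n ≤ m) (hn : 1 ≤ n)
    (α₀ : ℝ) (hα₀ : α₀ = η * D * ((m : ℝ) - (n : ℝ) + 3))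
    (a b : ℝ) (ha : a = α₀ / (4 * η * D)) (hb : b = β₁ / (4 * η * D))
    (p : ℝ → ℝ) (hp : ∀ x : ℝ, p x = x ^ (a - 1) * Real.exp (-b * x)) :
    a = ((m : ℝ) - (n : ℝ) + 3) / 4 ∧
    (∀ x : ℝ, 0 < x → DifferentiableAt ℝ p x) ∧
    (∀ x : ℝ, 0 < x → DifferentiableAt ℝ (deriv p) x) ∧
    (∀ x : ℝ, 0 < x →
      0 = -(deriv (fun y : ℝ => (α₀ - β₁ * y) * p y) x)
          + (1 / 2) * deriv (deriv (fun y : ℝ => 8 * η * D * y * p y)) x) := by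
  have hpe : p = fun x : ℝ => x ^ (a - 1) * Real.exp (-b * x) := funext hp
  subst hpe
  have h4 : (4 * η * D) ≠ 0 := by positivity
  have hαa : α₀ = 4 * η * D * a := by rw [ha]; field_simp
  have hβb : β₁ = 4 * η * D * b := by rw [hb]; field_simp
  -- abbreviations for derivative expressions
  set p0 : ℝ → ℝ := fun x : ℝ => x ^ (a - 1) * Real.exp (-b * x) with hp0
  set p1 : ℝ → ℝ := fun x : ℝ =>
    (a - 1) * x ^ (a - 2) * Real.exp (-b * x) - b * (x ^ (a - 1) * Real.exp (-b * x)) with hp1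
  set p2 : ℝ → ℝ := fun x : ℝ =>
    (a - 1) * ((a - 2) * x ^ (a - 3)) * Real.exp (-b * x)
      - (a - 1) * x ^ (a - 2) * (b * Real.exp (-b * x))
      - b * ((a - 1) * x ^ (a - 2) * Real.exp (-b * x)
              - b * (x ^ (a - 1) * Real.exp (-b * x))) with hp2
  have hexp : ∀ x : ℝ, HasDerivAt (fun y : ℝ => Real.exp (-b * y)) (-b * Real.exp (-b * x)) x := by
    intro x
    have h := (Real.hasDerivAt_exp (-b * x)).comp x ((hasDerivAt_id x).const_mul (-b))
    simpa [Function.comp_def, mul_comm] using h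
  have key1 : ∀ x : ℝ, 0 < x → HasDerivAt p0 (p1 x) x := by
    intro x hx
    have h1 : HasDerivAt (fun y : ℝ => y ^ (a - 1)) ((a - 1) * x ^ (a - 1 - 1)) x :=
      Real.hasDerivAt_rpow_const (Or.inl hx.ne')
    have h := h1.fun_mul (hexp x)
    have hae : a - 1 - 1 = a - 2 := by ring
    rw [hae] at h
    refine h.congr_deriv ?_
    simp [hp1]; ring
  have key2 : ∀ x : ℝ, 0 < x → HasDerivAt p1 (p2 x) x := by
    intro x hx
    have h1 : HasDerivAt (fun y : ℝ => y ^ (a - 2)) ((a - 2) * x ^ (a - 2 - 1)) x :=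
      Real.hasDerivAt_rpow_const (Or.inl hx.ne')
    have h2 : HasDerivAt (fun y : ℝ => (a - 1) * y ^ (a - 2)) ((a - 1) * ((a - 2) * x ^ (a - 2 - 1))) x :=
      h1.const_mul (a - 1)
    have h3 := h2.fun_mul (hexp x)
    have h4' := (key1 x hx).const_mul b
    have h := h3.fun_sub h4'
    have hae : a - 2 - 1 = a - 3 := by ring
    rw [hae] at h
    refine h.congr_deriv ?_
    simp [hp2, hp1]; ring
  -- eventual equality of deriv p0 with p1 near positive points
  have hderiv1 : ∀ x : ℝ, 0 < x → deriv p0 =ᶠ[nhds x] p1 := by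
    intro x hx
    filter_upwards [Ioi_mem_nhds hx] with y hy
    exact (key1 y hy).deriv
  have hderiv2 : ∀ x : ℝ, 0 < x → HasDerivAt (deriv p0) (p2 x) x := by
    intro x hx
    exact (key2 x hx).congr_of_eventuallyEq (hderiv1 x hx)
  refine ⟨by rw [ha, hα₀]; field_simp, fun x hx => (key1 x hx).differentiableAt,
    fun x hx => (hderiv2 x hx).differentiableAt, ?_⟩
  intro x hx
  -- first term
  have hA : HasDerivAt (fun y : ℝ => (α₀ - β₁ * y) * p0 y)
      (-β₁ * p0 x + (α₀ - β₁ * x) * p1 x) x := by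
    have h1 : HasDerivAt (fun y : ℝ => α₀ - β₁ * y) (-β₁) x := by
      simpa using ((hasDerivAt_id x).const_mul β₁).const_sub α₀
    simpa using h1.fun_mul (key1 x hx)
  -- second term: q y = 8ηD y p y
  have hq1 : ∀ y : ℝ, 0 < y → HasDerivAt (fun z : ℝ => 8 * η * D * z * p0 z)
      (8 * η * D * (p0 y + y * p1 y)) y := by
    intro y hy
    have h1 : HasDerivAt (fun z : ℝ => z * p0 z) (p0 y + y * p1 y) y := by
      simpa using (hasDerivAt_id y).fun_mul (key1 y hy)
    have := h1.const_mul (8 * η * D)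
    exact this.congr_of_eventuallyEq (Filter.Eventually.of_forall fun z => by ring)
  have hq2 : HasDerivAt (deriv (fun z : ℝ => 8 * η * D * z * p0 z))
      (8 * η * D * (p1 x + (p1 x + x * p2 x))) x := by
    have hev : deriv (fun z : ℝ => 8 * η * D * z * p0 z)
        =ᶠ[nhds x] fun y : ℝ => 8 * η * D * (p0 y + y * p1 y) := by
      filter_upwards [Ioi_mem_nhds hx] with y hy
      exact (hq1 y hy).deriv
    have h1 : HasDerivAt (fun y : ℝ => 8 * η * D * (p0 y + y * p1 y))
        (8 * η * D * (p1 x + (p1 x + x * p2 x))) x := by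
      have h2 : HasDerivAt (fun y : ℝ => y * p1 y) (p1 x + x * p2 x) x := by
        simpa using (hasDerivAt_id x).fun_mul (key2 x hx)
      exact ((key1 x hx).add h2).const_mul (8 * η * D)
    exact h1.congr_of_eventuallyEq hev
  rw [hA.deriv, hq2.deriv]
  -- algebra with rpow identities
  have e1 : x ^ (a - 2) = x ^ (a - 3) * x := by
    rw [show a - 2 = (a - 3) + 1 by ring, Real.rpow_add_one hx.ne']
  have e2 : x ^ (a - 1) = x ^ (a - 3) * x * x := by
    rw [show a - 1 = (a - 3) + 1 + 1 by ring, Real.rpow_add_one hx.ne', Real.rpow_add_one hx.ne']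
  simp only [hp0, hp1, hp2, e1, e2, hαa, hβb]
  ring
end

section
/- In the feedforward network setting, fix a layer x with 1 ≤ x ≤ X and let δ_x be the gradient of F_x at z_x = W_x·a_{x−1} + b_x. Then: (i) the map M ↦ F_x(M·a_{x−1} + b_x) on ℝ^{n_x × n_{x−1}} is differentiable at W_x and its gradient (with respect to the Frobenius inner product) is the rank-one matrix δ_x · a_{x−1}ᵀ; (ii) the map c ↦ F_x(W_x·a_{x−1} + c) on ℝ^{n_x} is differentiable at b_x with gradient δ_x. -/
open Matrix

attribute [local instance] Matrix.frobeniusNormedAddCommGroup Matrix.frobeniusNormedSpace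

/-- Corollary 6.3, Gradient Formulas.
In the feedforward setting, for a layer `x = y + 1` (`1 ≤ x ≤ X`), the map
`M ↦ F_x (M a_{x−1} + b_x)` is differentiable at `W_x` with gradient (w.r.t. the
Frobenius inner product) the rank-one matrix `δ_x a_{x−1}ᵀ`, i.e. with Fréchet
derivative `H ↦ Σᵢⱼ δ_{x,i} a_{x−1,j} H_{ij}`; and `c ↦ F_x (W_x a_{x−1} + c)` is
differentiable at `b_x` with gradient `δ_x`. -/
theorem backprop_gradient_formulas
    (X : ℕ) (hX : 1 ≤ X)
    (d : ℕ → ℕ)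
    (f : ℝ → ℝ) (hf : Differentiable ℝ f)
    (ℓ : (Fin (d X) → ℝ) → ℝ) (hℓ : Differentiable ℝ ℓ)
    (W : (x : ℕ) → Matrix (Fin (d (x + 1))) (Fin (d x)) ℝ)
    (b : (x : ℕ) → Fin (d (x + 1)) → ℝ)
    (a z : (x : ℕ) → Fin (d x) → ℝ)
    (hz : ∀ x < X, z (x + 1) = (W x).mulVec (a x) + b x)
    (ha : ∀ x < X, a (x + 1) = fun i => f (z (x + 1) i))
    (F : (x : ℕ) → (Fin (d x) → ℝ) → ℝ)
    (hFX : F X = fun zv => ℓ (fun i => f (zv i)))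
    (hFrec : ∀ x < X, F x = fun zv => F (x + 1) ((W x).mulVec (fun j => f (zv j)) + b x))
    (δ : (x : ℕ) → Fin (d x) → ℝ)
    (hδ : ∀ x : ℕ, ∀ i : Fin (d x), δ x i = fderiv ℝ (F x) (z x) (Pi.single i 1))
    (y : ℕ) (hy : y < X) :
    (∃ L : Matrix (Fin (d (y + 1))) (Fin (d y)) ℝ →L[ℝ] ℝ,
      (∀ H : Matrix (Fin (d (y + 1))) (Fin (d y)) ℝ,
        L H = ∑ i, ∑ j, δ (y + 1) i * a y j * H i j) ∧
      HasFDerivAt (fun M : Matrix (Fin (d (y + 1))) (Fin (d y)) ℝ =>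
        F (y + 1) (M.mulVec (a y) + b y)) L (W y)) ∧
    (∃ Lb : (Fin (d (y + 1)) → ℝ) →L[ℝ] ℝ,
      (∀ c : Fin (d (y + 1)) → ℝ, Lb c = ∑ i, δ (y + 1) i * c i) ∧
      HasFDerivAt (fun c : Fin (d (y + 1)) → ℝ =>
        F (y + 1) ((W y).mulVec (a y) + c)) Lb (b y)) := by
  -- Differentiability of F x for all x ≤ X, by downward induction
  have hdiff : ∀ n : ℕ, ∀ x : ℕ, x ≤ X → X - x = n → Differentiable ℝ (F x) := by
    intro n
    induction n with
    | zero =>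
      intro x hxle hsub
      have hxX : x = X := le_antisymm hxle (Nat.sub_eq_zero_iff_le.mp hsub)
      subst hxX
      rw [hFX]
      exact hℓ.comp (differentiable_pi.mpr fun i =>
        hf.comp (differentiable_pi.mp differentiable_id i))
    | succ n ih =>
      intro x hxle hsub
      have hxlt : x < X := by omega
      have hnext : Differentiable ℝ (F (x + 1)) := ih (x + 1) (by omega) (by omega)
      rw [hFrec x hxlt]
      have hg : Differentiable ℝ (fun zv : Fin (d x) → ℝ =>
          (W x).mulVec (fun j => f (zv j)) + b x) := by
        have h1 : Differentiable ℝ (fun zv : Fin (d x) → ℝ => fun j => f (zv j)) :=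
          differentiable_pi.mpr fun j => hf.comp (differentiable_pi.mp differentiable_id j)
        have h2 : Differentiable ℝ (fun v : Fin (d x) → ℝ => (W x).mulVec v) :=
          ((W x).mulVecLin.toContinuousLinearMap).differentiable
        exact (h2.comp h1).add_const (b x)
      exact hnext.comp hg
  have hFdiff : Differentiable ℝ (F (y + 1)) := hdiff (X - (y + 1)) (y + 1) (by omega) rfl
  -- derivative of F (y+1) at z (y+1)
  set D := fderiv ℝ (F (y + 1)) (z (y + 1)) with hD
  have hDz : HasFDerivAt (F (y + 1)) D (z (y + 1)) := (hFdiff (z (y + 1))).hasFDerivAt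
  have hzval : z (y + 1) = (W y).mulVec (a y) + b y := hz y hy
  have hDc : ∀ c : Fin (d (y + 1)) → ℝ, D c = ∑ i, δ (y + 1) i * c i := by
    intro c
    have hc : c = ∑ i, c i • (Pi.single i 1 : Fin (d (y + 1)) → ℝ) := by
      ext j
      simp [Pi.single_apply, Finset.sum_ite_eq]
    conv_lhs => rw [hc]
    rw [map_sum]
    refine Finset.sum_congr rfl fun i _ => ?_
    rw [D.map_smul, hδ (y + 1) i]
    simp [smul_eq_mul, mul_comm, hD]
  constructor
  · -- matrix part
    set A : Matrix (Fin (d (y + 1))) (Fin (d y)) ℝ →L[ℝ] (Fin (d (y + 1)) → ℝ) :=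
      LinearMap.toContinuousLinearMap
        { toFun := fun M => M.mulVec (a y)
          map_add' := fun M N => Matrix.add_mulVec M N (a y)
          map_smul' := fun r M => by
            ext i
            simp [Matrix.mulVec, dotProduct, Finset.mul_sum, mul_assoc] } with hA
    refine ⟨D.comp A, ?_, ?_⟩
    · intro H
      have : A H = H.mulVec (a y) := rfl
      rw [ContinuousLinearMap.comp_apply, this, hDc]
      refine Finset.sum_congr rfl fun i _ => ?_
      rw [Matrix.mulVec, dotProduct, Finset.mul_sum]
      exact Finset.sum_congr rfl fun j _ => by ring
    · have haff : HasFDerivAt (fun M : Matrix (Fin (d (y + 1))) (Fin (d y)) ℝ =>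
          A M + b y) A (W y) := (A.hasFDerivAt).add_const (b y)
      have hpt : A (W y) + b y = z (y + 1) := by rw [hzval]; rfl
      have hDz' : HasFDerivAt (F (y + 1)) D (A (W y) + b y) := hpt ▸ hDz
      exact hDz'.comp (W y) haff
  · -- bias part
    refine ⟨D, hDc, ?_⟩
    have haff : HasFDerivAt (fun c : Fin (d (y + 1)) → ℝ => (W y).mulVec (a y) + c)
        (ContinuousLinearMap.id ℝ (Fin (d (y + 1)) → ℝ)) (b y) :=
      (hasFDerivAt_id (b y)).const_add _
    have hpt : (W y).mulVec (a y) + b y = z (y + 1) := hzval.symm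
    have hDz' : HasFDerivAt (F (y + 1)) D ((W y).mulVec (a y) + b y) := hpt ▸ hDz
    have := hDz'.comp (b y) haff
    rw [ContinuousLinearMap.comp_id] at this
    exact this
end
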